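/- Theorem 1 (existence form): For every real α > 1 there exists a function F in the class P of Pick Argument Lessening functions such that F(z)^{α+1} = F(z) + z − 1 for all z ∈ H ∪ [1, ∞) (principal power; this is the functional equation p₂ = (1 + (p₃ − 1)/p₂)^{1/α}), and F(x) > 1 for every real x > 1. Moreover, on (1, ∞) the function F coincides with the inverse of the strictly increasing map t ↦ t^{α+1} − t + 1 from (1, ∞) onto (1, ∞). -/

import Mathlib

/- The upper half-plane H = {z : ℂ | Im z > 0}. -/
def UHP : Set ℂ := {z : ℂ | 0 < z.im}

/- The half-axis [1, ∞) viewed inside ℂ. -/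
def posRay : Set ℂ := {z : ℂ | z.im = 0 ∧ 1 ≤ z.re}

/-- The class P of Pick Argument Lessening functions. -/
structure IsPal (φ : ℂ → ℂ) : Prop where
  holo : DifferentiableOn ℂ φ UHP
  mapsUHP : ∀ z ∈ UHP, 0 < (φ z).im
  cont : ContinuousOn φ (UHP ∪ posRay)
  realOnRay : ∀ z ∈ posRay, (φ z).im = 0
  fix_one : φ 1 = 1

open Set Filter Topology

noncomputable section
namespace ThmOne

def hfun (α : ℝ) (t : ℝ) : ℝ := t ^ (α + 1) - t + 1
def gfun (α : ℝ) (w : ℂ) : ℂ := w ^ (((α + 1 : ℝ)) : ℂ) - w + 1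
def bet (α : ℝ) : ℝ := Real.pi / (α + 1)
def Sec (α : ℝ) : Set ℂ := {w | 0 < w.re ∧ 0 < w.im ∧ w.im < w.re * Real.tan (bet α)}
def TT (α : ℝ) : Set ℂ := {w | 0 < w.re ∧ 0 ≤ w.im ∧ w.im < w.re * Real.tan (bet α)}
def w0c (α : ℝ) : ℝ := ((α+1)⁻¹) ^ (α⁻¹)

variable {α : ℝ}


/-- polar representation of a real power -/
lemma cpow_polar {w : ℂ} (hw : w ≠ 0) (r : ℝ) :
    w ^ (r : ℂ) = ((‖w‖ ^ r : ℝ) : ℂ) * Complex.exp ((r * Complex.arg w : ℝ) * Complex.I) := by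
  rw [Complex.cpow_def_of_ne_zero hw, Complex.log]
  rw [Real.rpow_def_of_pos (norm_pos_iff.mpr hw)]
  push_cast
  rw [← Complex.exp_add]
  ring_nf

lemma cpow_im {w : ℂ} (hw : w ≠ 0) (r : ℝ) :
    (w ^ (r : ℂ)).im = ‖w‖ ^ r * Real.sin (r * Complex.arg w) := by
  rw [cpow_polar hw r, Complex.mul_im, Complex.ofReal_re, Complex.ofReal_im,
    Complex.exp_ofReal_mul_I_im, Complex.exp_ofReal_mul_I_re]
  ring

lemma cpow_re {w : ℂ} (hw : w ≠ 0) (r : ℝ) :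
    (w ^ (r : ℂ)).re = ‖w‖ ^ r * Real.cos (r * Complex.arg w) := by
  rw [cpow_polar hw r, Complex.mul_re, Complex.ofReal_re, Complex.ofReal_im,
    Complex.exp_ofReal_mul_I_im, Complex.exp_ofReal_mul_I_re]
  ring

lemma cpow_abs {w : ℂ} (hw : w ≠ 0) (r : ℝ) :
    ‖w ^ (r : ℂ)‖ = ‖w‖ ^ r := by
  rw [Complex.norm_cpow_of_ne_zero hw]
  simp

lemma bet_pos (hα : 1 < α) : 0 < bet α := by
  have : (0:ℝ) < α + 1 := by linarith
  exact div_pos Real.pi_pos this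

lemma bet_lt (hα : 1 < α) : bet α < Real.pi / 2 := by
  have h2 : (2:ℝ) < α + 1 := by linarith
  have := Real.pi_pos
  rw [bet, div_lt_div_iff₀ (by linarith) (by norm_num)]
  nlinarith

lemma tan_bet_pos (hα : 1 < α) : 0 < Real.tan (bet α) :=
  Real.tan_pos_of_pos_of_lt_pi_div_two (bet_pos hα) (bet_lt hα)

lemma Sec_subset_TT : Sec α ⊆ TT α := fun w hw => ⟨hw.1, le_of_lt hw.2.1, hw.2.2⟩

lemma arg_lt_bet (hα : 1 < α) {w : ℂ} (hre : 0 < w.re) (him : 0 ≤ w.im)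
    (h : w.im < w.re * Real.tan (bet α)) : Complex.arg w < bet α := by
  by_contra hc
  push_neg at hc
  have h1 : Complex.arg w < Real.pi / 2 := by
    rw [Complex.arg_lt_pi_div_two_iff]; exact Or.inl hre
  have h2 : Real.tan (bet α) ≤ Real.tan (Complex.arg w) := by
    rcases eq_or_lt_of_le hc with he | hl
    · rw [he]
    · exact le_of_lt (Real.tan_lt_tan_of_lt_of_lt_pi_div_two
        (by linarith [bet_pos hα, Real.pi_pos]) h1 hl)
  rw [Complex.tan_arg] at h2
  rw [le_div_iff₀ hre] at h2
  linarith

lemma arg_pos_of_im_pos {w : ℂ} (him : 0 < w.im) : 0 < Complex.arg w := by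
  rcases lt_or_eq_of_le (Complex.arg_nonneg_iff.mpr (le_of_lt him)) with h | h
  · exact h
  · exfalso
    have := Complex.arg_eq_zero_iff.mp h.symm
    linarith [this.2]

lemma sec_arg (hα : 1 < α) {w : ℂ} (hw : w ∈ Sec α) :
    0 < Complex.arg w ∧ Complex.arg w < bet α :=
  ⟨arg_pos_of_im_pos hw.2.1, arg_lt_bet hα hw.1 (le_of_lt hw.2.1) hw.2.2⟩

lemma sec_ne_zero {w : ℂ} (hw : 0 < w.re) : w ≠ 0 := by
  intro h; rw [h] at hw; simp at hw

lemma im_cpow_alpha_pos (hα : 1 < α) {w : ℂ} (hw : w ∈ Sec α) :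
    0 < (w ^ ((α : ℝ) : ℂ)).im := by
  have hw0 : w ≠ 0 := sec_ne_zero hw.1
  rw [cpow_im hw0 α]
  have harg := sec_arg hα hw
  have h1 : 0 < α * Complex.arg w := mul_pos (by linarith) harg.1
  have h2 : α * Complex.arg w < Real.pi := by
    have : α * Complex.arg w < α * bet α := by
      exact mul_lt_mul_of_pos_left harg.2 (by linarith)
    have hb : α * bet α < Real.pi := by
      rw [bet, mul_div_assoc']
      rw [div_lt_iff₀ (by linarith : (0:ℝ) < α + 1)]
      nlinarith [Real.pi_pos]
    linarith
  exact mul_pos (Real.rpow_pos_of_pos (norm_pos_iff.mpr hw0) α)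
    (Real.sin_pos_of_pos_of_lt_pi h1 h2)

/-- The key injectivity lemma. -/
lemma inj_on_TT (hα : 1 < α) {w₁ w₂ : ℂ} (h1 : w₁ ∈ TT α) (h2 : w₂ ∈ TT α)
    (him : 0 < w₁.im ∨ 0 < w₂.im) (heq : gfun α w₁ = gfun α w₂) : w₁ = w₂ := by
  by_contra hne
  set c : ℂ := (((α + 1 : ℝ)) : ℂ) with hc
  set D : ℂ := w₁ - w₂ with hD
  have hDne : D ≠ 0 := sub_ne_zero.mpr hne
  set γ : ℝ → ℂ := fun s => w₂ + (s : ℂ) * D with hγ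
  -- membership of the segment
  have hseg : ∀ s ∈ Icc (0:ℝ) 1, 0 < (γ s).re := by
    intro s hs
    have : (γ s).re = (1 - s) * w₂.re + s * w₁.re := by
      simp [hγ, hD, Complex.add_re, Complex.mul_re]; ring
    rw [this]
    rcases eq_or_lt_of_le hs.1 with h | h
    · simp [← h]; exact h2.1
    rcases eq_or_lt_of_le hs.2 with h' | h'
    · simp [h']; exact h1.1
    · nlinarith [h1.1, h2.1]
  have hsegre : ∀ s : ℝ, (γ s).re = (1 - s) * w₂.re + s * w₁.re := by
    intro s; simp [hγ, hD, Complex.add_re, Complex.mul_re]; ring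
  have hsegim : ∀ s : ℝ, (γ s).im = (1 - s) * w₂.im + s * w₁.im := by
    intro s; simp [hγ, hD, Complex.add_im, Complex.mul_im]; ring
  have hsec : ∀ s ∈ Ioo (0:ℝ) 1, γ s ∈ Sec α := by
    intro s hs
    have e1 := h1.2.2; have e2 := h2.2.2
    refine ⟨hseg s (Ioo_subset_Icc_self hs), ?_, ?_⟩
    · rw [hsegim]
      rcases him with h | h
      · nlinarith [h2.2.1, hs.1, hs.2]
      · nlinarith [h1.2.1, hs.1, hs.2]
    · rw [hsegim, hsegre]
      nlinarith [hs.1, hs.2]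
  have hγd : ∀ s : ℝ, HasDerivAt γ D s := by
    intro s
    have h0 : HasDerivAt (fun s : ℝ => (s : ℂ)) 1 s := Complex.ofRealCLM.hasDerivAt
    simpa [hγ] using (h0.mul_const D).const_add w₂
  have hder : ∀ s ∈ uIcc (0:ℝ) 1, HasDerivAt (fun s => γ s ^ c)
      (c * γ s ^ ((α : ℝ) : ℂ) * D) s := by
    intro s hs
    rw [uIcc_of_le (by norm_num : (0:ℝ) ≤ 1)] at hs
    have hmem : γ s ∈ Complex.slitPlane := Complex.mem_slitPlane_iff.mpr (Or.inl (hseg s hs))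
    have h3 := ((Complex.hasStrictDerivAt_cpow_const (c := c) hmem).hasDerivAt).comp s (hγd s)
    have hexp : c - 1 = ((α : ℝ) : ℂ) := by rw [hc]; push_cast; ring
    rw [hexp] at h3
    exact h3
  have hcont0 : ContinuousOn (fun s => c * γ s ^ ((α : ℝ) : ℂ)) (Icc (0:ℝ) 1) := by
    intro s hs
    have hmem : γ s ∈ Complex.slitPlane := Complex.mem_slitPlane_iff.mpr (Or.inl (hseg s hs))
    have hγc : Continuous γ := by
      simp only [hγ]; fun_prop
    have : ContinuousAt (fun s => c * γ s ^ ((α : ℝ) : ℂ)) s :=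
      ((continuousAt_cpow_const hmem).comp hγc.continuousAt).const_mul c
    exact this.continuousWithinAt
  have hcont : ContinuousOn (fun s => c * γ s ^ ((α : ℝ) : ℂ) * D) (Icc (0:ℝ) 1) :=
    hcont0.mul continuousOn_const
  have hu : uIcc (0:ℝ) 1 = Icc (0:ℝ) 1 := uIcc_of_le (by norm_num)
  have hintg : IntervalIntegrable (fun s => c * γ s ^ ((α : ℝ) : ℂ) * D)
      MeasureTheory.volume 0 1 := by
    apply ContinuousOn.intervalIntegrable
    rw [hu]; exact hcont
  have hftc := intervalIntegral.integral_eq_sub_of_hasDerivAt hder hintg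
  have hγ1 : γ 1 = w₁ := by simp [hγ, hD]
  have hγ0 : γ 0 = w₂ := by simp [hγ]
  rw [hγ1, hγ0] at hftc
  have hpow : w₁ ^ c - w₂ ^ c = D := by
    have h5 := heq
    simp only [gfun] at h5
    rw [← hc] at h5
    rw [hD]
    linear_combination h5
  rw [hpow] at hftc
  rw [intervalIntegral.integral_mul_const] at hftc
  have hJ : (∫ s in (0:ℝ)..1, c * γ s ^ ((α : ℝ) : ℂ)) = 1 := by
    have := mul_right_cancel₀ hDne (hftc.trans (one_mul D).symm)
    exact this
  have hintg0 : IntervalIntegrable (fun s => c * γ s ^ ((α : ℝ) : ℂ))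
      MeasureTheory.volume 0 1 := by
    apply ContinuousOn.intervalIntegrable
    rw [hu]; exact hcont0
  have hIm : (∫ s in (0:ℝ)..1, (c * γ s ^ ((α : ℝ) : ℂ)).im) = 0 := by
    have := Complex.imCLM.intervalIntegral_comp_comm hintg0
    simp only [Complex.imCLM_apply] at this
    rw [this, hJ]
    simp
  have hpos : 0 < ∫ s in (0:ℝ)..1, (c * γ s ^ ((α : ℝ) : ℂ)).im := by
    apply intervalIntegral.intervalIntegral_pos_of_pos_on
    · apply ContinuousOn.intervalIntegrable
      rw [hu]
      exact Complex.continuous_im.comp_continuousOn hcont0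
    · intro s hs
      have hsm := hsec s hs
      have := im_cpow_alpha_pos hα hsm
      rw [hc]
      rw [Complex.im_ofReal_mul]
      nlinarith
    · norm_num
  linarith

lemma hfun_one : hfun α 1 = 1 := by simp [hfun]

lemma hfun_strictMono (hα : 1 < α) : StrictMonoOn (hfun α) (Ici 1) := by
  have hconv : Convex ℝ (Ici (1:ℝ)) := convex_Ici 1
  apply strictMonoOn_of_deriv_pos hconv
  · apply ContinuousOn.add
    apply ContinuousOn.sub
    · intro t ht
      exact (Real.continuousAt_rpow_const t (α+1)
        (Or.inl (by intro h; rw [h] at ht; simp at ht; linarith))).continuousWithinAt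
    · exact continuousOn_id
    · exact continuousOn_const
  · intro t ht
    rw [interior_Ici] at ht
    have ht1 : (1:ℝ) < t := ht
    have hd : HasDerivAt (hfun α) ((α + 1) * t ^ α - 1) t := by
      have h1 : HasDerivAt (fun t : ℝ => t ^ (α+1)) ((α + 1) * t ^ (α + 1 - 1)) t :=
        Real.hasDerivAt_rpow_const (Or.inl (by linarith))
      have h2 : HasDerivAt (fun t : ℝ => t) 1 t := hasDerivAt_id t
      have := (h1.sub h2).add_const 1
      have e : hfun α = fun t => t ^ (α+1) - t + 1 := rfl
      rw [e]
      simpa [add_sub_cancel_right] using this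
    rw [hd.deriv]
    have : (1:ℝ) ≤ t ^ α := Real.one_le_rpow ht1.le (by linarith)
    nlinarith

lemma hfun_gt_one (hα : 1 < α) {t : ℝ} (ht : 1 < t) : 1 < hfun α t := by
  have := hfun_strictMono hα (self_mem_Ici) (mem_Ici.mpr ht.le) ht
  rwa [hfun_one] at this

lemma hfun_cont (hα : 1 < α) : ContinuousOn (hfun α) (Ici 1) := by
  apply ContinuousOn.add
  apply ContinuousOn.sub
  · intro t ht
    exact (Real.continuousAt_rpow_const t (α+1)
      (Or.inl (by intro h; rw [h] at ht; simp at ht; linarith))).continuousWithinAt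
  · exact continuousOn_id
  · exact continuousOn_const

lemma hfun_upper (hα : 1 < α) {x : ℝ} (hx : 1 ≤ x) : x ≤ hfun α (x + 1) := by
  have h1 : ((x+1):ℝ) ^ (2:ℝ) ≤ (x+1) ^ (α+1) :=
    Real.rpow_le_rpow_of_exponent_le (by linarith) (by linarith)
  have h2 : ((x+1):ℝ) ^ (2:ℝ) = (x+1)^2 := by
    rw [← Real.rpow_natCast (x+1) 2]; norm_num
  rw [h2] at h1
  simp only [hfun]
  nlinarith

lemma hfun_surj (hα : 1 < α) {x : ℝ} (hx : 1 ≤ x) : ∃ t ∈ Icc 1 (x+1), hfun α t = x := by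
  have hsub : Icc (hfun α 1) (hfun α (x+1)) ⊆ hfun α '' Icc 1 (x+1) :=
    intermediate_value_Icc (by linarith) ((hfun_cont hα).mono (Icc_subset_Ici_self))
  have hxmem : x ∈ Icc (hfun α 1) (hfun α (x+1)) := by
    rw [hfun_one]; exact ⟨hx, hfun_upper hα hx⟩
  obtain ⟨t, ht, hth⟩ := hsub hxmem
  exact ⟨t, ht, hth⟩

/-- the inverse function on [1,∞) -/
def psi (α : ℝ) (x : ℝ) : ℝ := if h : 1 < α ∧ 1 ≤ x then (hfun_surj h.1 h.2).choose else 1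

lemma psi_spec (hα : 1 < α) {x : ℝ} (hx : 1 ≤ x) :
    1 ≤ psi α x ∧ hfun α (psi α x) = x := by
  rw [psi, dif_pos ⟨hα, hx⟩]
  obtain ⟨ht, hth⟩ := (hfun_surj hα hx).choose_spec
  exact ⟨ht.1, hth⟩

lemma psi_gt_one (hα : 1 < α) {x : ℝ} (hx : 1 < x) : 1 < psi α x := by
  obtain ⟨h1, h2⟩ := psi_spec hα hx.le
  rcases eq_or_lt_of_le h1 with h | h
  · exfalso; rw [← h] at h2; rw [hfun_one] at h2; linarith
  · exact h

lemma psi_one (hα : 1 < α) : psi α 1 = 1 := by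
  obtain ⟨h1, h2⟩ := psi_spec hα (le_refl 1)
  rcases eq_or_lt_of_le h1 with h | h
  · exact h.symm
  · exfalso; have := hfun_gt_one hα h; linarith

lemma hfun_lt_one (hα : 1 < α) {t : ℝ} (h0 : 0 < t) (h1 : t < 1) : hfun α t < 1 := by
  have : t ^ (α+1) < t ^ (1:ℝ) :=
    Real.rpow_lt_rpow_of_exponent_gt h0 h1 (by linarith)
  rw [Real.rpow_one] at this
  simp only [hfun]; linarith

/-- `sin (k θ) ≤ k sin θ` for `θ ∈ [0, π/k]`, `k ≥ 1`. -/
lemma sin_mul_le {k θ : ℝ} (hk : 1 ≤ k) (h0 : 0 ≤ θ) (h1 : k * θ ≤ Real.pi) :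
    Real.sin (k * θ) ≤ k * Real.sin θ := by
  set f : ℝ → ℝ := fun t => k * Real.sin t - Real.sin (k * t) with hf
  have hder : ∀ t : ℝ, HasDerivAt f (k * Real.cos t - Real.cos (k * t) * k) t := by
    intro t
    have h2 : HasDerivAt (fun t : ℝ => k * t) k t := by
      simpa using (hasDerivAt_id t).const_mul k
    have h3 : HasDerivAt (fun t : ℝ => Real.sin (k * t)) (Real.cos (k * t) * k) t :=
      (Real.hasDerivAt_sin (k * t)).comp t h2
    exact ((Real.hasDerivAt_sin t).const_mul k).sub h3
  have hmono : MonotoneOn f (Icc 0 (Real.pi / k)) := by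
    apply monotoneOn_of_deriv_nonneg (convex_Icc _ _)
    · exact Continuous.continuousOn (by fun_prop)
    · intro t ht
      exact (hder t).differentiableAt.differentiableWithinAt
    · intro t ht
      rw [interior_Icc] at ht
      rw [(hder t).deriv]
      have hc : Real.cos (k * t) ≤ Real.cos t := by
        apply Real.cos_le_cos_of_nonneg_of_le_pi ht.1.le
        · calc k * t ≤ k * (Real.pi / k) := by
                apply mul_le_mul_of_nonneg_left ht.2.le (by linarith)
             _ = Real.pi := by field_simp
        · nlinarith [ht.1]
      nlinarith
  have hθ : θ ∈ Icc 0 (Real.pi / k) := by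
    constructor
    · exact h0
    · rw [le_div_iff₀ (by linarith : (0:ℝ) < k)]; linarith
  have h00 : (0:ℝ) ∈ Icc 0 (Real.pi / k) := by
    constructor
    · exact le_refl 0
    · positivity
  have := hmono h00 hθ h0
  simp only [hf] at this
  simp at this
  linarith [this]

lemma w0c_pos (hα : 1 < α) : 0 < w0c α := Real.rpow_pos_of_pos (by positivity) _

lemma w0c_le_one (hα : 1 < α) : w0c α ≤ 1 :=
  Real.rpow_le_one (by positivity) (by rw [inv_le_one₀] <;> linarith) (by positivity)

/-- g of a nonneg real is the real function -/
lemma gfun_real {t : ℝ} (ht : 0 ≤ t) : gfun α (t : ℂ) = ((hfun α t : ℝ) : ℂ) := by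
  simp only [gfun, hfun]
  rw [← Complex.ofReal_cpow ht]
  push_cast
  ring

/-- lower bound on solutions in the sector over the upper half plane -/
lemma abs_gt_w0c (hα : 1 < α) {w : ℂ} (hw : w ∈ Sec α) (him : 0 < (gfun α w).im) :
    w0c α < ‖w‖ := by
  have hw0 : w ≠ 0 := sec_ne_zero hw.1
  have harg := sec_arg hα hw
  have hgim : (gfun α w).im = ‖w‖ ^ (α+1) * Real.sin ((α+1) * Complex.arg w) - w.im := by
    simp only [gfun, Complex.add_im, Complex.sub_im, Complex.one_im]
    rw [cpow_im hw0 (α+1)]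
    ring
  have himw : w.im = ‖w‖ * Real.sin (Complex.arg w) := by
    rw [Complex.sin_arg, mul_div_cancel₀]
    exact norm_ne_zero_iff.mpr hw0
  have hsin : Real.sin ((α+1) * Complex.arg w) ≤ (α+1) * Real.sin (Complex.arg w) := by
    apply sin_mul_le (by linarith) harg.1.le
    calc (α+1) * Complex.arg w ≤ (α+1) * bet α := by
          apply mul_le_mul_of_nonneg_left harg.2.le (by linarith)
      _ = Real.pi := by rw [bet]; field_simp
  have hsinpos : 0 < Real.sin (Complex.arg w) := by
    apply Real.sin_pos_of_pos_of_lt_pi harg.1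
    calc Complex.arg w < bet α := harg.2
      _ ≤ Real.pi := by
          rw [bet, div_le_iff₀ (by linarith)]
          nlinarith [Real.pi_pos]
  have habs : 0 < ‖w‖ := norm_pos_iff.mpr hw0
  -- from him : A^{α+1} sin((α+1)θ) > A sinθ
  have hineq : ‖w‖ * Real.sin (Complex.arg w)
      < ‖w‖ ^ (α+1) * ((α+1) * Real.sin (Complex.arg w)) := by
    have h1 : ‖w‖ * Real.sin (Complex.arg w)
        < ‖w‖ ^ (α+1) * Real.sin ((α+1) * Complex.arg w) := by
      rw [hgim, himw] at him; linarith
    have h2 : ‖w‖ ^ (α+1) * Real.sin ((α+1) * Complex.arg w)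
        ≤ ‖w‖ ^ (α+1) * ((α+1) * Real.sin (Complex.arg w)) := by
      apply mul_le_mul_of_nonneg_left hsin (by positivity)
    linarith
  have hA : (α+1)⁻¹ < ‖w‖ ^ α := by
    have h3 : ‖w‖ < ‖w‖ ^ (α+1) * (α+1) := by
      have := (mul_lt_mul_iff_left₀ hsinpos).mp (by
        calc ‖w‖ * Real.sin (Complex.arg w)
            < ‖w‖ ^ (α+1) * ((α+1) * Real.sin (Complex.arg w)) := hineq
          _ = ‖w‖ ^ (α+1) * (α+1) * Real.sin (Complex.arg w) := by ring)
      exact this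
    rw [inv_lt_iff_one_lt_mul₀ (by linarith)]
    have h4 : ‖w‖ ^ (α + 1) = ‖w‖ ^ α * ‖w‖ := by
      rw [Real.rpow_add habs, Real.rpow_one]
    rw [h4] at h3
    have h5 : 1 < ‖w‖ ^ α * (α+1) := by
      by_contra hcon
      push_neg at hcon
      have hAα : 0 < ‖w‖ ^ α := Real.rpow_pos_of_pos habs α
      nlinarith
    linarith
  -- conclude abs w > ((α+1)⁻¹)^(1/α)
  have hkey := Real.rpow_lt_rpow (by positivity) hA (by positivity : (0:ℝ) < α⁻¹)
  have h6 : (‖w‖ ^ α) ^ α⁻¹ = ‖w‖ := by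
    rw [← Real.rpow_mul habs.le, mul_inv_cancel₀ (by linarith : α ≠ 0), Real.rpow_one]
  rw [h6] at hkey
  exact hkey

lemma gfun_hasStrictDerivAt {w : ℂ} (hw : w ∈ Complex.slitPlane) :
    HasStrictDerivAt (gfun α) ((((α + 1 : ℝ)) : ℂ) * w ^ ((α : ℝ) : ℂ) - 1) w := by
  have h1 := Complex.hasStrictDerivAt_cpow_const (c := (((α + 1 : ℝ)) : ℂ)) hw
  have hexp : (((α + 1 : ℝ)) : ℂ) - 1 = ((α : ℝ) : ℂ) := by push_cast; ring
  rw [hexp] at h1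
  have h2 := (h1.sub (hasStrictDerivAt_id w)).add_const 1
  have : gfun α = fun y : ℂ => y ^ (((α + 1 : ℝ)) : ℂ) - y + 1 := rfl
  rw [this]
  push_cast at h2 ⊢
  simpa using h2

lemma gderiv_ne_zero (hα : 1 < α) {w : ℂ} (hw : w ∈ Sec α) :
    (((α + 1 : ℝ)) : ℂ) * w ^ ((α : ℝ) : ℂ) - 1 ≠ 0 := by
  intro h
  have him : ((((α + 1 : ℝ)) : ℂ) * w ^ ((α : ℝ) : ℂ) - 1).im
      = (α+1) * (w ^ ((α : ℝ) : ℂ)).im := by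
    simp [Complex.sub_im, Complex.im_ofReal_mul]
  rw [h] at him
  simp at him
  have h2 := im_cpow_alpha_pos hα hw
  rcases him with h3 | h3
  · linarith
  · rw [h3] at h2; linarith

lemma sec_slit {w : ℂ} (hw : w ∈ Sec α) : w ∈ Complex.slitPlane :=
  Complex.mem_slitPlane_iff.mpr (Or.inl hw.1)

lemma gfun_continuousAt {w : ℂ} (hw : w ∈ Complex.slitPlane) :
    ContinuousAt (gfun α) w := by
  apply ContinuousAt.add
  apply ContinuousAt.sub
  · exact continuousAt_cpow_const hw
  · exact continuousAt_id
  · exact continuousAt_const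

lemma abs_bound (hα : 1 < α) {w : ℂ} {C : ℝ} (hC : ‖gfun α w‖ ≤ C) :
    ‖w‖ ≤ max 1 ((C + 2) ^ (α⁻¹ : ℝ)) := by
  rcases eq_or_ne w 0 with rfl | hw0
  · simp
  rcases le_or_gt (‖w‖) 1 with h | h
  · exact le_max_of_le_left h
  apply le_max_of_le_right
  have hC0 : 0 ≤ C := le_trans (norm_nonneg _) hC
  set t := ‖w‖ with ht
  have habs : t ^ (α+1) = ‖w ^ (((α + 1 : ℝ)) : ℂ)‖ := (cpow_abs hw0 (α+1)).symm
  have h2 : ‖w ^ (((α + 1 : ℝ)) : ℂ)‖ ≤ C + 1 + t := by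
    have he : w ^ (((α + 1 : ℝ)) : ℂ) = gfun α w - 1 + w := by simp only [gfun]; ring
    rw [he]
    calc ‖gfun α w - 1 + w‖ ≤ ‖gfun α w - 1‖ + ‖w‖ :=
          norm_add_le _ _
      _ ≤ (‖gfun α w‖ + ‖(1:ℂ)‖) + t := by
          have h6 := norm_sub_le_norm_sub_add_norm_sub (gfun α w) 0 1
          simp only [sub_zero, zero_sub, map_neg_eq_map, norm_neg] at h6
          linarith
      _ ≤ C + 1 + t := by simp only [norm_one]; linarith
  have h3 : t ^ (α+1) ≤ (C+2) * t := by
    rw [habs]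
    calc ‖w ^ (((α + 1 : ℝ)) : ℂ)‖ ≤ C + 1 + t := h2
      _ ≤ (C+2)*t := by nlinarith
  have h4 : t ^ α ≤ C + 2 := by
    have ht0 : 0 < t := by linarith
    have : t ^ (α+1) = t ^ α * t := by rw [Real.rpow_add ht0, Real.rpow_one]
    rw [this] at h3
    have := (mul_le_mul_iff_left₀ ht0).mp h3
    linarith [this]
  calc t = (t ^ α) ^ (α⁻¹:ℝ) := by
        rw [← Real.rpow_mul (by linarith : (0:ℝ) ≤ t), mul_inv_cancel₀ (by linarith : α ≠ 0),
          Real.rpow_one]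
    _ ≤ (C+2) ^ (α⁻¹:ℝ) := Real.rpow_le_rpow (by positivity) h4 (by positivity)

lemma isOpen_Sec (hα : 1 < α) : IsOpen (Sec α) := by
  apply IsOpen.inter (isOpen_lt continuous_const Complex.continuous_re)
  apply IsOpen.inter (isOpen_lt continuous_const Complex.continuous_im)
  exact isOpen_lt Complex.continuous_im (Complex.continuous_re.mul continuous_const)

lemma isOpen_image (hα : 1 < α) : IsOpen ((gfun α) '' (Sec α)) := by
  rw [isOpen_iff_mem_nhds]
  rintro z ⟨w, hw, rfl⟩
  have hmap := (gfun_hasStrictDerivAt (sec_slit hw)).map_nhds_eq (gderiv_ne_zero hα hw)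
  rw [← hmap]
  exact image_mem_map ((isOpen_Sec hα).mem_nhds hw)

/-- boundary exclusion: a limit point of the sector mapping into reality -/
lemma limit_in_sec (hα : 1 < α) {w : ℂ} (hw0 : w ≠ 0)
    (hre : 0 ≤ w.re) (him : 0 ≤ w.im) (htan : w.im ≤ w.re * Real.tan (bet α))
    (hgim : 0 < (gfun α w).im) : w ∈ Sec α := by
  have hrepos : 0 < w.re := by
    rcases eq_or_lt_of_le hre with h | h
    · exfalso
      have : w.im ≤ 0 := by rw [← h] at htan; simpa using htan
      have him0 : w.im = 0 := le_antisymm this him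
      apply hw0
      exact Complex.ext (by simp [← h]) (by simp [him0])
    · exact h
  have himpos : 0 < w.im := by
    rcases eq_or_lt_of_le him with h | h
    · exfalso
      have hreal : w = ((w.re : ℝ) : ℂ) := Complex.ext rfl (by simp [← h])
      rw [hreal, gfun_real hre] at hgim
      simp at hgim
    · exact h
  refine ⟨hrepos, himpos, ?_⟩
  rcases eq_or_lt_of_le htan with h | h
  · exfalso
    -- arg w = bet α, so Im (g w) = -im w < 0
    have harglt : Complex.arg w < Real.pi / 2 := by
      rw [Complex.arg_lt_pi_div_two_iff]; exact Or.inl hrepos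
    have hargpos : 0 < Complex.arg w := by
      rcases lt_or_eq_of_le (Complex.arg_nonneg_iff.mpr him) with h' | h'
      · exact h'
      · exfalso; have := Complex.arg_eq_zero_iff.mp h'.symm; linarith [this.2]
    have htanarg : Real.tan (Complex.arg w) = Real.tan (bet α) := by
      rw [Complex.tan_arg, h]
      field_simp
    have harg : Complex.arg w = bet α := by
      have hinj := Real.injOn_tan
      apply hinj ⟨by linarith, harglt⟩ ⟨by linarith [bet_pos hα, Real.pi_pos], bet_lt hα⟩ htanarg
    have hgim2 : (gfun α w).im = ‖w‖ ^ (α+1) * Real.sin ((α+1) * Complex.arg w) - w.im := by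
      simp only [gfun, Complex.add_im, Complex.sub_im, Complex.one_im]
      rw [cpow_im hw0 (α+1)]
      ring
    rw [harg] at hgim2
    have : (α+1) * bet α = Real.pi := by rw [bet]; field_simp
    rw [this, Real.sin_pi] at hgim2
    simp at hgim2
    rw [hgim2] at hgim
    linarith
  · exact h

/-- closedness of the image intersected with UHP, within UHP -/
lemma closure_inter (hα : 1 < α) :
    closure ((gfun α) '' (Sec α) ∩ UHP) ∩ UHP ⊆ (gfun α) '' (Sec α) ∩ UHP := by
  rintro z ⟨hzc, hz⟩
  obtain ⟨u, hu, hulim⟩ := mem_closure_iff_seq_limit.mp hzc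
  choose wseq hwsec hwg using fun n => (hu n).1
  -- boundedness
  have habs : Tendsto (fun n => ‖u n‖) atTop (𝓝 (‖z‖)) :=
    (continuous_norm.tendsto z).comp hulim
  obtain ⟨C, hC⟩ := habs.bddAbove_range
  have hCb : ∀ n, ‖u n‖ ≤ C := fun n => hC (mem_range_self n)
  set R := max 1 ((C + 2) ^ (α⁻¹ : ℝ)) with hR
  have hwb : ∀ n, wseq n ∈ Metric.closedBall (0:ℂ) R := by
    intro n
    rw [Metric.mem_closedBall, dist_zero_right]
    exact abs_bound hα (by rw [hwg n]; exact hCb n)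
  obtain ⟨w, hwcl, φ, hφ, hwlim⟩ :=
    tendsto_subseq_of_bounded (Metric.isBounded_closedBall (x := (0:ℂ)) (r := R)) hwb
  -- limit in closed sector
  have hclosed : IsClosed {v : ℂ | 0 ≤ v.re ∧ 0 ≤ v.im ∧ v.im ≤ v.re * Real.tan (bet α)} := by
    apply IsClosed.inter (isClosed_le continuous_const Complex.continuous_re)
    apply IsClosed.inter (isClosed_le continuous_const Complex.continuous_im)
    exact isClosed_le Complex.continuous_im (Complex.continuous_re.mul continuous_const)
  have hwC : w ∈ {v : ℂ | 0 ≤ v.re ∧ 0 ≤ v.im ∧ v.im ≤ v.re * Real.tan (bet α)} := by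
    apply hclosed.mem_of_tendsto hwlim
    filter_upwards with n
    exact ⟨(hwsec (φ n)).1.le, (hwsec (φ n)).2.1.le, (hwsec (φ n)).2.2.le⟩
  have hulimφ : Tendsto (fun n => u (φ n)) atTop (𝓝 z) := hulim.comp hφ.tendsto_atTop
  -- case w = 0
  rcases eq_or_ne w 0 with rfl | hw0
  · exfalso
    -- then u (φ n) → 1, so z = 1, contradicting Im z > 0
    have htend : Tendsto (fun n => u (φ n)) atTop (𝓝 1) := by
      have h1 : Tendsto (fun n => ‖wseq (φ n)‖) atTop (𝓝 0) := by
        have := (continuous_norm.tendsto (0:ℂ)).comp hwlim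
        simpa [Function.comp_def] using this
      -- |u n - 1| ≤ |w|^{α+1} + |w|
      rw [tendsto_iff_norm_sub_tendsto_zero]
      apply squeeze_zero (fun n => norm_nonneg _)
        (g := fun n => ‖wseq (φ n)‖ ^ (α+1) + ‖wseq (φ n)‖)
      · intro n
        have he : u (φ n) - 1 = wseq (φ n) ^ (((α + 1 : ℝ)) : ℂ) - wseq (φ n) := by
          rw [← hwg (φ n)]; simp only [gfun]; ring
        rw [he]
        calc ‖_‖ ≤ ‖wseq (φ n) ^ (((α + 1 : ℝ)) : ℂ)‖ + ‖wseq (φ n)‖ :=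
              norm_sub_le _ _
          _ ≤ ‖wseq (φ n)‖ ^ (α+1) + ‖wseq (φ n)‖ := by
              rw [cpow_abs (sec_ne_zero (hwsec (φ n)).1)]
      · have h2 : Tendsto (fun n => ‖wseq (φ n)‖ ^ (α+1)) atTop (𝓝 0) := by
          have hc : ContinuousAt (fun x : ℝ => x ^ (α+1)) 0 :=
            Real.continuousAt_rpow_const 0 (α+1) (Or.inr (by linarith))
          have := hc.tendsto.comp h1
          simpa [Function.comp_def, Real.zero_rpow (by linarith : α + 1 ≠ 0)] using this
        simpa using h2.add h1
    have : z = 1 := tendsto_nhds_unique hulimφ htend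
    rw [this] at hz
    simp [UHP] at hz
  -- case w ≠ 0
  · have hslit : w ∈ Complex.slitPlane := by
      apply Complex.mem_slitPlane_iff.mpr
      rcases eq_or_lt_of_le hwC.1 with h | h
      · right
        intro him0
        apply hw0
        exact Complex.ext (by simp [← h]) (by simp [him0])
      · exact Or.inl h
    have hglim : Tendsto (fun n => gfun α (wseq (φ n))) atTop (𝓝 (gfun α w)) :=
      (gfun_continuousAt hslit).tendsto.comp hwlim
    have : gfun α w = z := by
      apply tendsto_nhds_unique _ hulimφ
      simpa only [fun n => hwg (φ n)] using hglim
    have hwsec2 : w ∈ Sec α :=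
      limit_in_sec hα hw0 hwC.1 hwC.2.1 hwC.2.2 (by rw [this]; exact hz)
    exact ⟨⟨w, hwsec2, this⟩, hz⟩

lemma exists_interior_point (hα : 1 < α) :
    ∃ w ∈ Sec α, 0 < (gfun α w).im := by
  set θ := bet α / 2 with hθ
  have hθpos : 0 < θ := by have := bet_pos hα; positivity
  have hθlt : θ < Real.pi / 2 := by have := bet_lt hα; have := bet_pos hα; linarith
  set w : ℂ := (Real.cos θ : ℂ) + (Real.sin θ : ℂ) * Complex.I with hw
  have hcos : 0 < Real.cos θ := Real.cos_pos_of_mem_Ioo ⟨by linarith, hθlt⟩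
  have hsin : 0 < Real.sin θ := Real.sin_pos_of_pos_of_lt_pi hθpos (by linarith [Real.pi_pos])
  have hre : w.re = Real.cos θ := by simp [hw, Complex.cos_ofReal_re]
  have him : w.im = Real.sin θ := by simp [hw, Complex.sin_ofReal_re]
  have hwc : w = Complex.cos (θ : ℂ) + Complex.sin (θ : ℂ) * Complex.I := by
    rw [hw, Complex.ofReal_cos, Complex.ofReal_sin]
  have habs : ‖w‖ = 1 := by rw [hwc]; exact Complex.norm_cos_add_sin_mul_I θ
  have harg : Complex.arg w = θ := by
    rw [hwc]
    exact Complex.arg_cos_add_sin_mul_I ⟨by linarith [Real.pi_pos], by linarith [Real.pi_pos]⟩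
  have hwsec : w ∈ Sec α := by
    refine ⟨by rw [hre]; exact hcos, by rw [him]; exact hsin, ?_⟩
    rw [hre, him]
    have h1 : Real.tan θ < Real.tan (bet α) := by
      apply Real.tan_lt_tan_of_lt_of_lt_pi_div_two (by linarith) (bet_lt hα)
      linarith [bet_pos hα]
    have h2 : Real.sin θ = Real.cos θ * Real.tan θ := by
      rw [Real.tan_eq_sin_div_cos]
      field_simp
    rw [h2]
    exact mul_lt_mul_of_pos_left h1 hcos
  refine ⟨w, hwsec, ?_⟩
  have hw0 : w ≠ 0 := by
    intro h
    rw [h] at hre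
    simp at hre
    linarith
  have hgim : (gfun α w).im = ‖w‖ ^ (α+1) * Real.sin ((α+1) * Complex.arg w) - w.im := by
    simp only [gfun, Complex.add_im, Complex.sub_im, Complex.one_im]
    rw [cpow_im hw0 (α+1)]
    ring
  rw [hgim, habs, harg, him]
  have : (α+1) * θ = Real.pi / 2 := by
    rw [hθ, bet]; field_simp
  rw [this, Real.sin_pi_div_two, Real.one_rpow]
  have : Real.sin θ < 1 := by
    calc Real.sin θ < Real.sin (Real.pi / 2) :=
          Real.strictMonoOn_sin ⟨by linarith, hθlt.le⟩ ⟨by linarith [Real.pi_pos], le_refl _⟩ hθlt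
      _ = 1 := Real.sin_pi_div_two
  linarith

lemma gfun_surjUHP (hα : 1 < α) : ∀ z ∈ UHP, ∃ w ∈ Sec α, gfun α w = z := by
  have hpre : IsPreconnected UHP := (convex_halfSpace_im_gt 0).isPreconnected
  have hopen : IsOpen ((gfun α) '' (Sec α) ∩ UHP) :=
    (isOpen_image hα).inter (isOpen_lt continuous_const Complex.continuous_im)
  have hne : (UHP ∩ ((gfun α) '' (Sec α) ∩ UHP)).Nonempty := by
    obtain ⟨w, hwsec, hwim⟩ := exists_interior_point hα
    exact ⟨gfun α w, hwim, ⟨w, hwsec, rfl⟩, hwim⟩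
  have hsub := hpre.subset_of_closure_inter_subset hopen hne (closure_inter hα)
  intro z hz
  obtain ⟨⟨w, hwsec, hwg⟩, _⟩ := hsub hz
  exact ⟨w, hwsec, hwg⟩

lemma isOpen_UHP : IsOpen UHP := isOpen_lt continuous_const Complex.continuous_im

/-- if w is in the closed sector, nonzero, and g w is real with x ≥ 1, then w = psi x -/
lemma ray_unique (hα : 1 < α) {w : ℂ} {x : ℝ} (hx : 1 ≤ x) (hw0 : w ≠ 0)
    (hre : 0 ≤ w.re) (him : 0 ≤ w.im) (htan : w.im ≤ w.re * Real.tan (bet α))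
    (hg : gfun α w = (x : ℂ)) : w = ((psi α x : ℝ) : ℂ) := by
  have hψ := psi_spec hα hx
  have hψ0 : (0:ℝ) ≤ psi α x := by linarith [hψ.1]
  have hgψ : gfun α ((psi α x : ℝ) : ℂ) = (x : ℂ) := by
    rw [gfun_real hψ0, hψ.2]
  have hrepos : 0 < w.re := by
    rcases eq_or_lt_of_le hre with h | h
    · exfalso
      have h1 : w.im ≤ 0 := by rw [← h] at htan; simpa using htan
      exact hw0 (Complex.ext (by simp [← h]) (by simp [le_antisymm h1 him]))
    · exact h
  rcases eq_or_lt_of_le him with h | himpos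
  · -- w is real
    have hwre : w = ((w.re : ℝ) : ℂ) := Complex.ext rfl (by simp [← h])
    have hreal : hfun α w.re = x := by
      rw [hwre, gfun_real hrepos.le] at hg
      exact_mod_cast hg
    have hge1 : 1 ≤ w.re := by
      by_contra hlt
      push_neg at hlt
      have := hfun_lt_one hα hrepos hlt
      linarith [this, hreal]
    have : w.re = psi α x :=
      (hfun_strictMono hα).injOn (mem_Ici.mpr hge1) (mem_Ici.mpr hψ.1)
        (by rw [hreal, hψ.2])
    rw [hwre, this]
  · -- w has positive imaginary part: impossible
    exfalso
    rcases eq_or_lt_of_le htan with h | h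
    · -- arg = bet: Im g w = -im w < 0 but = 0
      have harglt : Complex.arg w < Real.pi / 2 := by
        rw [Complex.arg_lt_pi_div_two_iff]; exact Or.inl hrepos
      have hargpos : 0 < Complex.arg w := by
        rcases lt_or_eq_of_le (Complex.arg_nonneg_iff.mpr him) with h' | h'
        · exact h'
        · exfalso; have := Complex.arg_eq_zero_iff.mp h'.symm; linarith [this.2]
      have htanarg : Real.tan (Complex.arg w) = Real.tan (bet α) := by
        rw [Complex.tan_arg, h]
        field_simp
      have harg : Complex.arg w = bet α :=
        Real.injOn_tan ⟨by linarith, harglt⟩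
          ⟨by linarith [bet_pos hα, Real.pi_pos], bet_lt hα⟩ htanarg
      have hgim : (gfun α w).im
          = ‖w‖ ^ (α+1) * Real.sin ((α+1) * Complex.arg w) - w.im := by
        simp only [gfun, Complex.add_im, Complex.sub_im, Complex.one_im]
        rw [cpow_im hw0 (α+1)]
        ring
      rw [harg] at hgim
      have hπ : (α+1) * bet α = Real.pi := by rw [bet]; field_simp
      rw [hπ, Real.sin_pi] at hgim
      simp only [mul_zero, zero_sub] at hgim
      have : (gfun α w).im = 0 := by rw [hg]; simp
      rw [this] at hgim
      linarith
    · -- w in open sector: contradiction with injectivity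
      have hwsec : w ∈ Sec α := ⟨hrepos, himpos, h⟩
      have hψTT : ((psi α x : ℝ) : ℂ) ∈ TT α := by
        refine ⟨by simpa using (by linarith [hψ.1] : (0:ℝ) < psi α x), by simp, ?_⟩
        simp only [Complex.ofReal_im, Complex.ofReal_re]
        have := tan_bet_pos hα
        have h9 : (0:ℝ) < psi α x := by linarith [hψ.1]
        positivity
      have := inj_on_TT hα (Sec_subset_TT hwsec) hψTT (Or.inl himpos)
        (by rw [hg, hgψ])
      rw [this] at himpos
      simp at himpos


def Ffun (α : ℝ) (z : ℂ) : ℂ :=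
  if hz : 1 < α ∧ 0 < z.im then (gfun_surjUHP hz.1 z hz.2).choose
  else ((psi α z.re : ℝ) : ℂ)

lemma Ffun_spec (hα : 1 < α) {z : ℂ} (hz : z ∈ UHP) :
    Ffun α z ∈ Sec α ∧ gfun α (Ffun α z) = z := by
  rw [Ffun, dif_pos ⟨hα, hz⟩]
  obtain ⟨h1, h2⟩ := (gfun_surjUHP hα z hz).choose_spec
  exact ⟨h1, h2⟩

lemma Ffun_ray {z : ℂ} (hz : z.im = 0) : Ffun α z = ((psi α z.re : ℝ) : ℂ) := by
  rw [Ffun, dif_neg]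
  rintro ⟨-, h⟩
  rw [hz] at h
  exact lt_irrefl 0 h

lemma Ffun_unique (hα : 1 < α) {z w : ℂ} (hz : z ∈ UHP) (hw : w ∈ Sec α)
    (hg : gfun α w = z) : w = Ffun α z := by
  obtain ⟨h1, h2⟩ := Ffun_spec hα hz
  exact inj_on_TT hα (Sec_subset_TT hw) (Sec_subset_TT h1) (Or.inl hw.2.1)
    (hg.trans h2.symm)

lemma Ffun_differentiableAt (hα : 1 < α) {z : ℂ} (hz : z ∈ UHP) :
    DifferentiableAt ℂ (Ffun α) z := by
  obtain ⟨hsec, hg⟩ := Ffun_spec hα hz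
  have hsd := gfun_hasStrictDerivAt (α := α) (sec_slit hsec)
  have hne := gderiv_ne_zero hα hsec
  set E := hsd.hasStrictFDerivAt_equiv hne with hE
  have hinv : ∀ᶠ y in 𝓝 (gfun α (Ffun α z)), gfun α (E.localInverse (gfun α) _ _ y) = y :=
    E.eventually_right_inverse
  have hcont : ContinuousAt (E.localInverse (gfun α) _ _) (gfun α (Ffun α z)) :=
    E.localInverse_continuousAt
  have happ : E.localInverse (gfun α) _ _ (gfun α (Ffun α z)) = Ffun α z :=
    E.localInverse_apply_image
  have hSec : ∀ᶠ y in 𝓝 (gfun α (Ffun α z)), E.localInverse (gfun α) _ _ y ∈ Sec α :=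
    hcont.eventually_mem ((isOpen_Sec hα).mem_nhds (by rw [happ]; exact hsec))
  have hUHP : ∀ᶠ y in 𝓝 z, y ∈ UHP := isOpen_UHP.mem_nhds hz
  rw [hg] at hinv hSec
  have heqF : (fun y => E.localInverse (gfun α) _ _ y) =ᶠ[𝓝 z] Ffun α := by
    filter_upwards [hinv, hSec, hUHP] with y h1 h2 h3
    exact Ffun_unique hα h3 h2 h1
  have hdiff : DifferentiableAt ℂ (E.localInverse (gfun α) _ _) z := by
    have := E.to_localInverse
    rw [hg] at this
    exact this.differentiableAt
  exact hdiff.congr_of_eventuallyEq heqF.symm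

lemma Ffun_tendsto_ray (hα : 1 < α) {z : ℂ} (hz : z ∈ posRay) :
    ContinuousWithinAt (Ffun α) (UHP ∪ posRay) z := by
  obtain ⟨him0, hre1⟩ := hz
  set x := z.re with hx
  have hzx : ((x : ℝ) : ℂ) = z := Complex.ext (by simp [hx]) (by simp [him0])
  have hFz : Ffun α z = ((psi α x : ℝ) : ℂ) := Ffun_ray him0
  rw [ContinuousWithinAt, hFz]
  apply tendsto_of_subseq_tendsto
  intro ns hns
  have hmem : ∀ᶠ n in atTop, ns n ∈ UHP ∪ posRay :=
    hns self_mem_nhdsWithin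
  obtain ⟨N, hN⟩ := eventually_atTop.mp hmem
  have hlim : Tendsto ns atTop (𝓝 z) := hns.mono_right nhdsWithin_le_nhds
  set v : ℕ → ℂ := fun n => ns (n + N) with hv
  have hvmem : ∀ n, v n ∈ UHP ∪ posRay := fun n => hN (n + N) (by omega)
  have hvlim : Tendsto v atTop (𝓝 z) := hlim.comp (tendsto_add_atTop_nat N)
  set wn : ℕ → ℂ := fun n => Ffun α (v n) with hwn
  -- basic facts about wn
  have hwfacts : ∀ n, gfun α (wn n) = v n ∧ 0 ≤ (wn n).re ∧ 0 ≤ (wn n).im ∧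
      (wn n).im ≤ (wn n).re * Real.tan (bet α) ∧ w0c α ≤ ‖wn n‖ := by
    intro n
    rcases hvmem n with h | h
    · obtain ⟨hsec, hg⟩ := Ffun_spec hα h
      refine ⟨hg, hsec.1.le, hsec.2.1.le, hsec.2.2.le, ?_⟩
      exact (abs_gt_w0c hα hsec (by rw [hg]; exact h)).le
    · -- ray case
      have hray : wn n = ((psi α (v n).re : ℝ) : ℂ) := Ffun_ray h.1
      have hψ := psi_spec hα h.2
      have hψ1 : 1 ≤ psi α (v n).re := hψ.1
      refine ⟨?_, ?_, ?_, ?_, ?_⟩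
      · rw [hray, gfun_real (by linarith), hψ.2]
        exact Complex.ext (by simp) (by simp [h.1])
      · rw [hray]; simp; linarith
      · rw [hray]; simp
      · rw [hray]; simp only [Complex.ofReal_im, Complex.ofReal_re]
        have := tan_bet_pos hα
        positivity
      · rw [hray]
        rw [Complex.norm_real, Real.norm_of_nonneg (by linarith)]
        linarith [w0c_le_one hα]
  -- boundedness
  have habs : Tendsto (fun n => ‖v n‖) atTop (𝓝 (‖z‖)) :=
    (continuous_norm.tendsto z).comp hvlim
  obtain ⟨C, hC⟩ := habs.bddAbove_range
  have hCb : ∀ n, ‖v n‖ ≤ C := fun n => hC (mem_range_self n)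
  set R := max 1 ((C + 2) ^ (α⁻¹ : ℝ)) with hR
  have hwb : ∀ n, wn n ∈ Metric.closedBall (0:ℂ) R := by
    intro n
    rw [Metric.mem_closedBall, dist_zero_right]
    exact abs_bound hα (by rw [(hwfacts n).1]; exact hCb n)
  obtain ⟨w, hwcl, φ, hφ, hwlim⟩ :=
    tendsto_subseq_of_bounded (Metric.isBounded_closedBall (x := (0:ℂ)) (r := R)) hwb
  -- limit facts
  have hclosed : IsClosed {u : ℂ | 0 ≤ u.re ∧ 0 ≤ u.im ∧ u.im ≤ u.re * Real.tan (bet α)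
      ∧ w0c α ≤ ‖u‖} := by
    apply IsClosed.inter (isClosed_le continuous_const Complex.continuous_re)
    apply IsClosed.inter (isClosed_le continuous_const Complex.continuous_im)
    apply IsClosed.inter (isClosed_le Complex.continuous_im
      (Complex.continuous_re.mul continuous_const))
    exact isClosed_le continuous_const continuous_norm
  have hwC : 0 ≤ w.re ∧ 0 ≤ w.im ∧ w.im ≤ w.re * Real.tan (bet α)
      ∧ w0c α ≤ ‖w‖ := by
    have := hclosed.mem_of_tendsto hwlim (by
      filter_upwards with n
      exact ⟨(hwfacts (φ n)).2.1, (hwfacts (φ n)).2.2.1, (hwfacts (φ n)).2.2.2.1,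
        (hwfacts (φ n)).2.2.2.2⟩)
    exact this
  have hw0 : w ≠ 0 := by
    intro h
    rw [h] at hwC
    simp at hwC
    have := w0c_pos hα
    linarith [hwC]
  have hslit : w ∈ Complex.slitPlane := by
    apply Complex.mem_slitPlane_iff.mpr
    rcases eq_or_lt_of_le hwC.1 with h | h
    · right
      intro him0'
      apply hw0
      exact Complex.ext (by simp [← h]) (by simp [him0'])
    · exact Or.inl h
  have hvlimφ : Tendsto (fun n => v (φ n)) atTop (𝓝 z) := hvlim.comp hφ.tendsto_atTop
  have hgw : gfun α w = ((x : ℝ) : ℂ) := by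
    rw [hzx]
    apply tendsto_nhds_unique _ hvlimφ
    have hglim : Tendsto (fun n => gfun α (wn (φ n))) atTop (𝓝 (gfun α w)) :=
      (gfun_continuousAt hslit).tendsto.comp hwlim
    simpa only [fun n => (hwfacts (φ n)).1] using hglim
  have hwψ : w = ((psi α x : ℝ) : ℂ) :=
    ray_unique hα hre1 hw0 hwC.1 hwC.2.1 hwC.2.2.1 hgw
  refine ⟨fun n => φ n + N, ?_⟩
  have : (fun n => Ffun α (ns (φ n + N))) = fun n => wn (φ n) := rfl
  rw [this]
  rw [← hwψ]
  exact hwlim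

end ThmOne

open ThmOne in
/-- Theorem 1, existence form: for every α > 1 there is a
function F in the class P solving the functional equation
F(z)^{α+1} = F(z) + z − 1 on H ∪ [1, ∞), with F(x) > 1 for real x > 1; on
(1, ∞) it is the inverse of the strictly increasing map
t ↦ t^{α+1} − t + 1 from (1, ∞) onto (1, ∞). -/
theorem theorem_one_existence (α : ℝ) (hα : 1 < α) :
    StrictMonoOn (fun t : ℝ => t ^ (α + 1) - t + 1) (Set.Ioi 1) ∧
    (fun t : ℝ => t ^ (α + 1) - t + 1) '' Set.Ioi 1 = Set.Ioi 1 ∧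
    ∃ F : ℂ → ℂ, IsPal F ∧
      (∀ z ∈ UHP ∪ posRay, F z ^ (((α + 1 : ℝ)) : ℂ) = F z + z - 1) ∧
      (∀ x : ℝ, 1 < x → 1 < (F (x : ℂ)).re) ∧
      (∀ x : ℝ, 1 < x → (F (x : ℂ)).re ^ (α + 1) - (F (x : ℂ)).re + 1 = x) := by
  refine ⟨?_, ?_, ?_⟩
  · exact (hfun_strictMono hα).mono Set.Ioi_subset_Ici_self
  · ext x
    simp only [Set.mem_image, Set.mem_Ioi]
    constructor
    · rintro ⟨t, ht, rfl⟩
      exact hfun_gt_one hα ht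
    · intro hx
      obtain ⟨t, ht, hth⟩ := hfun_surj hα hx.le
      refine ⟨t, ?_, hth⟩
      rcases eq_or_lt_of_le ht.1 with h | h
      · exfalso
        rw [← h] at hth
        rw [hfun_one] at hth
        linarith
      · exact h
  · refine ⟨Ffun α, ⟨?_, ?_, ?_, ?_, ?_⟩, ?_, ?_, ?_⟩
    · exact fun z hz => (Ffun_differentiableAt hα hz).differentiableWithinAt
    · exact fun z hz => ((Ffun_spec hα hz).1).2.1
    · intro z hz
      rcases hz with h | h
      · exact ((Ffun_differentiableAt hα h).continuousAt).continuousWithinAt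
      · exact Ffun_tendsto_ray hα h
    · intro z hz
      rw [Ffun_ray hz.1]
      simp
    · have h1 : (1:ℂ).im = 0 := rfl
      rw [Ffun_ray h1]
      rw [show (1:ℂ).re = (1:ℝ) from rfl, psi_one hα]
      simp
    · intro z hz
      rcases hz with h | h
      · have hg := (Ffun_spec hα h).2
        simp only [gfun] at hg
        linear_combination hg
      · have hψ := psi_spec hα h.2
        have hψ0 : (0:ℝ) ≤ psi α z.re := by linarith [hψ.1]
        have hzx : ((z.re : ℝ) : ℂ) = z := Complex.ext (by simp) (by simp [h.1])
        rw [Ffun_ray h.1]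
        have hg : gfun α ((psi α z.re : ℝ) : ℂ) = z := by
          rw [gfun_real hψ0, hψ.2, hzx]
        simp only [gfun] at hg
        linear_combination hg
    · intro x hx
      have him : ((x : ℝ) : ℂ).im = 0 := by simp
      rw [Ffun_ray him]
      simp only [Complex.ofReal_re]
      exact psi_gt_one hα (by simpa using hx)
    · intro x hx
      have him : ((x : ℝ) : ℂ).im = 0 := by simp
      rw [Ffun_ray him]
      simp only [Complex.ofReal_re]
      have hψ := psi_spec hα (le_of_lt (by simpa using hx))
      have := hψ.2
      simp only [hfun] at this
      simpa using this
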